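/- Let A ∈ Mat_{n×n}(k) be a square matrix of index 1 over a field k, and let ν₁ = n − rank(A). Then the set of G-Drazin inverses of A is in bijection with k^{ν₁²}. -/

import Mathlib

open Module Submodule Matrix

section
variable {k : Type*} [Field k] {n : ℕ} (A : Matrix (Fin n) (Fin n) k)

lemma aux_ker_sq (h1 : A.rank = (A ^ 2).rank) :
    LinearMap.ker ((A ^ 2).mulVecLin) = LinearMap.ker A.mulVecLin := by
  symm
  apply Submodule.eq_of_le_of_finrank_le
  · intro x hx
    simp only [LinearMap.mem_ker] at hx ⊢
    rw [pow_two, mulVecLin_mul, LinearMap.comp_apply, hx, map_zero]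
  · have h := LinearMap.finrank_range_add_finrank_ker A.mulVecLin
    have h' := LinearMap.finrank_range_add_finrank_ker (A ^ 2).mulVecLin
    rw [Module.finrank_pi] at h h'
    have : A.rank + finrank k (LinearMap.ker A.mulVecLin)
        = (A ^ 2).rank + finrank k (LinearMap.ker (A ^ 2).mulVecLin) := by
      rw [Matrix.rank, Matrix.rank, h, h']
    omega

lemma aux_range_sq (h1 : A.rank = (A ^ 2).rank) :
    LinearMap.range ((A ^ 2).mulVecLin) = LinearMap.range A.mulVecLin := by
  apply Submodule.eq_of_le_of_finrank_le
  · intro x hx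
    obtain ⟨y, rfl⟩ := hx
    rw [pow_two, mulVecLin_mul]
    exact ⟨_, rfl⟩
  · exact le_of_eq h1

lemma aux_isCompl (h1 : A.rank = (A ^ 2).rank) :
    IsCompl (LinearMap.range A.mulVecLin) (LinearMap.ker A.mulVecLin) := by
  have hdisj : Disjoint (LinearMap.range A.mulVecLin) (LinearMap.ker A.mulVecLin) := by
    rw [Submodule.disjoint_def]
    rintro x ⟨y, rfl⟩ hk
    have : y ∈ LinearMap.ker ((A ^ 2).mulVecLin) := by
      rw [LinearMap.mem_ker, pow_two, mulVecLin_mul, LinearMap.comp_apply]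
      exact hk
    rw [aux_ker_sq A h1, LinearMap.mem_ker] at this
    exact this
  refine ⟨hdisj, ?_⟩
  rw [codisjoint_iff]
  apply Submodule.eq_top_of_finrank_eq
  have hsum := Submodule.finrank_sup_add_finrank_inf_eq
    (LinearMap.range A.mulVecLin) (LinearMap.ker A.mulVecLin)
  rw [hdisj.eq_bot, finrank_bot, add_zero] at hsum
  rw [hsum, LinearMap.finrank_range_add_finrank_ker, Module.finrank_pi]

end

section
variable {k : Type*} [Field k] {n : ℕ} (A : Matrix (Fin n) (Fin n) k)

noncomputable def auxG : (LinearMap.range A.mulVecLin) →ₗ[k] (LinearMap.range A.mulVecLin) :=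
  A.mulVecLin.restrict (fun x _ => ⟨x, rfl⟩)

lemma auxG_bijective (h1 : A.rank = (A ^ 2).rank) : Function.Bijective (auxG A) := by
  constructor
  · rw [← LinearMap.ker_eq_bot, Submodule.eq_bot_iff]
    rintro ⟨x, hx⟩ hker
    have hx0 : A.mulVecLin x = 0 := by
      have := congrArg Subtype.val hker
      exact this
    have : x ∈ LinearMap.range A.mulVecLin ⊓ LinearMap.ker A.mulVecLin := ⟨hx, hx0⟩
    rw [(aux_isCompl A h1).inf_eq_bot] at this
    simpa using this
  · rintro ⟨y, hy⟩
    have : y ∈ LinearMap.range ((A ^ 2).mulVecLin) := by rw [aux_range_sq A h1]; exact hy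
    obtain ⟨w, hw⟩ := this
    rw [pow_two, mulVecLin_mul, LinearMap.comp_apply] at hw
    refine ⟨⟨A.mulVecLin w, ⟨w, rfl⟩⟩, ?_⟩
    apply Subtype.ext
    exact hw

noncomputable def auxE (h1 : A.rank = (A ^ 2).rank) :
    (LinearMap.range A.mulVecLin) ≃ₗ[k] (LinearMap.range A.mulVecLin) :=
  LinearEquiv.ofBijective (auxG A) (auxG_bijective A h1)

noncomputable def auxX0lin (h1 : A.rank = (A ^ 2).rank) : (Fin n → k) →ₗ[k] (Fin n → k) :=
  (LinearMap.range A.mulVecLin).subtype ∘ₗ ((auxE A h1).symm : _ →ₗ[k] _)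
    ∘ₗ (LinearMap.range A.mulVecLin).projectionOnto _ (aux_isCompl A h1)

noncomputable def auxX0 (h1 : A.rank = (A ^ 2).rank) : Matrix (Fin n) (Fin n) k :=
  LinearMap.toMatrix' (auxX0lin A h1)

lemma aux_mvl_inj : Function.Injective
    (Matrix.mulVecLin : Matrix (Fin n) (Fin n) k → (Fin n → k) →ₗ[k] (Fin n → k)) := by
  intro M N h
  have : Matrix.toLin' M = Matrix.toLin' N := h
  exact (Matrix.toLin'.injective this)

lemma auxX0_mvl (h1 : A.rank = (A ^ 2).rank) :
    (auxX0 A h1).mulVecLin = auxX0lin A h1 := Matrix.toLin'_toMatrix' _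

lemma auxE_apply (h1 : A.rank = (A ^ 2).rank) (x : LinearMap.range A.mulVecLin) :
    ((auxE A h1 x : LinearMap.range A.mulVecLin) : Fin n → k) = A.mulVecLin x := by
  rfl

lemma auxX0_prop1 (h1 : A.rank = (A ^ 2).rank) : A * auxX0 A h1 * A = A := by
  apply aux_mvl_inj
  rw [mulVecLin_mul, mulVecLin_mul, auxX0_mvl]
  refine LinearMap.ext fun v => ?_
  simp only [LinearMap.comp_apply]
  have hmem : A.mulVecLin v ∈ LinearMap.range A.mulVecLin := ⟨v, rfl⟩
  have hproj : (LinearMap.range A.mulVecLin).projectionOnto _ (aux_isCompl A h1)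
      (A.mulVecLin v) = ⟨A.mulVecLin v, hmem⟩ :=
    Submodule.projectionOnto_apply_left _ ⟨A.mulVecLin v, hmem⟩
  rw [auxX0lin]
  simp only [LinearMap.comp_apply, hproj]
  have := auxE_apply A h1 ((auxE A h1).symm ⟨A.mulVecLin v, hmem⟩)
  rw [LinearEquiv.apply_symm_apply] at this
  exact this.symm

lemma auxX0_prop2 (h1 : A.rank = (A ^ 2).rank) :
    auxX0 A h1 * A = A * auxX0 A h1 := by
  apply aux_mvl_inj
  rw [mulVecLin_mul, mulVecLin_mul, auxX0_mvl]
  refine LinearMap.ext fun v => ?_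
  simp only [LinearMap.comp_apply]
  set R := LinearMap.range A.mulVecLin
  set hc := aux_isCompl A h1
  set p := R.projectionOnto _ hc v with hp
  -- decompose v
  have hdecomp : (p : Fin n → k) + ((LinearMap.ker A.mulVecLin).projectionOnto _ hc.symm v : Fin n → k) = v :=
    Submodule.projection_add_projection_eq_self hc v
  have hfv : A.mulVecLin v = A.mulVecLin (p : Fin n → k) := by
    conv_lhs => rw [← hdecomp]
    rw [map_add]
    have : A.mulVecLin ((LinearMap.ker A.mulVecLin).projectionOnto _ hc.symm v : Fin n → k) = 0 :=
      ((LinearMap.ker A.mulVecLin).projectionOnto _ hc.symm v).2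
    rw [this, add_zero]
  have hmem : A.mulVecLin v ∈ R := ⟨v, rfl⟩
  have hEp : auxE A h1 p = ⟨A.mulVecLin v, hmem⟩ := by
    apply Subtype.ext
    rw [auxE_apply]
    exact hfv.symm
  -- LHS
  have hL : auxX0lin A h1 (A.mulVecLin v) = ((auxE A h1).symm ⟨A.mulVecLin v, hmem⟩ : Fin n → k) := by
    rw [auxX0lin]
    simp only [LinearMap.comp_apply]
    rw [Submodule.projectionOnto_apply_left _ ⟨A.mulVecLin v, hmem⟩]
    rfl
  -- RHS
  have hR : A.mulVecLin (auxX0lin A h1 v) = (p : Fin n → k) := by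
    rw [auxX0lin]
    simp only [LinearMap.comp_apply, Submodule.coe_subtype]
    have := auxE_apply A h1 ((auxE A h1).symm p)
    rw [LinearEquiv.apply_symm_apply] at this
    exact this.symm
  rw [hL, hR, ← hEp, LinearEquiv.symm_apply_apply]

end

section
variable {k : Type*} [Field k] {n : ℕ} (A : Matrix (Fin n) (Fin n) k)

lemma aux_mvl_toMatrix' (f : (Fin n → k) →ₗ[k] (Fin n → k)) :
    (LinearMap.toMatrix' f).mulVecLin = f := Matrix.toLin'_toMatrix' f

lemma aux_kill (h1 : A.rank = (A ^ 2).rank) (B : Matrix (Fin n) (Fin n) k)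
    (hB : A * B * A = 0) (hcomm : B * A = A * B) : A * B = 0 ∧ B * A = 0 := by
  have h2 : A ^ 2 * B = 0 := by
    rw [pow_two, mul_assoc, ← hcomm, ← mul_assoc]
    exact hB
  have hAB : A * B = 0 := by
    apply aux_mvl_inj
    rw [mulVecLin_mul, mulVecLin_zero]
    refine LinearMap.ext fun v => ?_
    have : B.mulVecLin v ∈ LinearMap.ker ((A ^ 2).mulVecLin) := by
      rw [LinearMap.mem_ker, ← LinearMap.comp_apply, ← mulVecLin_mul, h2, mulVecLin_zero]
      rfl
    rw [aux_ker_sq A h1, LinearMap.mem_ker] at this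
    exact this
  exact ⟨hAB, by rw [hcomm, hAB]⟩

/-- Translation by the group inverse: G-Drazin inverses correspond to matrices annihilated
by `A` on both sides. -/
noncomputable def auxEquiv1 (h1 : A.rank = (A ^ 2).rank) :
    {X : Matrix (Fin n) (Fin n) k // A * X * A = A ∧ X * A = A * X} ≃
      {Y : Matrix (Fin n) (Fin n) k // A * Y = 0 ∧ Y * A = 0} where
  toFun X := ⟨X.1 - auxX0 A h1, by
    have hB : A * (X.1 - auxX0 A h1) * A = 0 := by
      rw [mul_sub, sub_mul, X.2.1, auxX0_prop1 A h1, sub_self]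
    have hcomm : (X.1 - auxX0 A h1) * A = A * (X.1 - auxX0 A h1) := by
      rw [sub_mul, mul_sub, X.2.2, auxX0_prop2 A h1]
    exact aux_kill A h1 _ hB hcomm⟩
  invFun Y := ⟨auxX0 A h1 + Y.1, by
    constructor
    · rw [mul_add, add_mul, auxX0_prop1 A h1, Y.2.1, zero_mul, add_zero]
    · rw [add_mul, mul_add, Y.2.1, Y.2.2, auxX0_prop2 A h1]⟩
  left_inv X := by
    apply Subtype.ext
    simp
  right_inv Y := by
    apply Subtype.ext
    simp

noncomputable def auxEquiv2 (h1 : A.rank = (A ^ 2).rank) :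
    {Y : Matrix (Fin n) (Fin n) k // A * Y = 0 ∧ Y * A = 0} ≃
      ((LinearMap.ker A.mulVecLin) →ₗ[k] (LinearMap.ker A.mulVecLin)) where
  toFun Y := Y.1.mulVecLin.restrict (p := LinearMap.ker A.mulVecLin)
    (q := LinearMap.ker A.mulVecLin) (fun x _ => by
      rw [LinearMap.mem_ker, ← LinearMap.comp_apply, ← mulVecLin_mul, Y.2.1, mulVecLin_zero]
      rfl)
  invFun h := ⟨LinearMap.toMatrix'
      ((LinearMap.ker A.mulVecLin).subtype ∘ₗ h ∘ₗ
        (LinearMap.ker A.mulVecLin).projectionOnto _ (aux_isCompl A h1).symm), by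
    constructor
    · apply aux_mvl_inj
      rw [mulVecLin_mul, aux_mvl_toMatrix', mulVecLin_zero]
      refine LinearMap.ext fun v => ?_
      simp only [LinearMap.comp_apply, Submodule.coe_subtype, LinearMap.zero_apply]
      exact (h ((LinearMap.ker A.mulVecLin).projectionOnto _ (aux_isCompl A h1).symm v)).2
    · apply aux_mvl_inj
      rw [mulVecLin_mul, aux_mvl_toMatrix', mulVecLin_zero]
      refine LinearMap.ext fun v => ?_
      simp only [LinearMap.comp_apply, Submodule.coe_subtype, LinearMap.zero_apply]
      have hmem : A.mulVecLin v ∈ LinearMap.range A.mulVecLin := ⟨v, rfl⟩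
      have : (LinearMap.ker A.mulVecLin).projectionOnto _ (aux_isCompl A h1).symm
          (A.mulVecLin v) = 0 :=
        Submodule.projectionOnto_apply_right (aux_isCompl A h1).symm ⟨A.mulVecLin v, hmem⟩
      rw [this, map_zero, Submodule.coe_zero]⟩
  left_inv Y := by
    apply Subtype.ext
    apply aux_mvl_inj
    rw [aux_mvl_toMatrix']
    refine LinearMap.ext fun v => ?_
    simp only [LinearMap.comp_apply, Submodule.coe_subtype, LinearMap.restrict_coe_apply]
    set hc := aux_isCompl A h1
    have hdecomp : ((LinearMap.range A.mulVecLin).projectionOnto _ hc v : Fin n → k)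
        + ((LinearMap.ker A.mulVecLin).projectionOnto _ hc.symm v : Fin n → k) = v :=
      Submodule.projection_add_projection_eq_self hc v
    have hkill : ∀ r ∈ LinearMap.range A.mulVecLin, Y.1.mulVecLin r = 0 := by
      rintro r ⟨w, rfl⟩
      rw [← LinearMap.comp_apply, ← mulVecLin_mul, Y.2.2, mulVecLin_zero]
      rfl
    conv_rhs => rw [← hdecomp]
    rw [map_add, hkill _ ((LinearMap.range A.mulVecLin).projectionOnto _ hc v).2, zero_add]
  right_inv h := by
    refine LinearMap.ext fun x => ?_
    apply Subtype.ext
    rw [LinearMap.restrict_coe_apply, aux_mvl_toMatrix']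
    simp only [LinearMap.comp_apply, Submodule.coe_subtype]
    rw [Submodule.projectionOnto_apply_left (aux_isCompl A h1).symm x]

end

/-- For an `n×n` matrix `A` of index 1 over a field `k`, with `ν₁ = n - rank A`, the set of
G-Drazin inverses of `A` is in bijection with `k^(ν₁²)`. -/
theorem stmt15 {k : Type*} [Field k] {n : ℕ} (A : Matrix (Fin n) (Fin n) k)
    (h1 : A.rank = (A ^ 2).rank) (h2 : A.rank < n) :
    Nonempty
      ({X : Matrix (Fin n) (Fin n) k // A * X * A = A ∧ X * A = A * X} ≃
        (Fin (n - A.rank) × Fin (n - A.rank) → k)) := by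
  have hrk : A.rank + Module.finrank k (LinearMap.ker A.mulVecLin) = n := by
    have h := LinearMap.finrank_range_add_finrank_ker A.mulVecLin
    rw [Module.finrank_pi, Fintype.card_fin] at h
    rw [Matrix.rank]
    exact h
  have hK : Module.finrank k (LinearMap.ker A.mulVecLin) = n - A.rank := by omega
  haveI : Module.Free k ↥(LinearMap.ker A.mulVecLin) := Module.Free.of_divisionRing k _
  haveI : Module.Free k ((LinearMap.ker A.mulVecLin) →ₗ[k] (LinearMap.ker A.mulVecLin)) :=
    Module.Free.linearMap _ _ _ _
  have hfr : Module.finrank k ((LinearMap.ker A.mulVecLin) →ₗ[k] (LinearMap.ker A.mulVecLin))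
      = Module.finrank k (Fin (n - A.rank) × Fin (n - A.rank) → k) := by
    rw [Module.finrank_linearMap, hK, Module.finrank_pi, Fintype.card_prod, Fintype.card_fin]
  set_option synthInstance.maxHeartbeats 1000000 in
  obtain ⟨l⟩ := FiniteDimensional.nonempty_linearEquiv_of_finrank_eq hfr
  exact ⟨(auxEquiv1 A h1).trans ((auxEquiv2 A h1).trans l.toEquiv)⟩
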